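/- Let H be a complex Hilbert space, let 0 < φ < π/2, and let e, k ∈ H be unit vectors with ⟨e, k⟩ = cos φ. For vectors f, g ∈ H let f×g denote the rank-one operator h ↦ ⟨h, g⟩·f. Then for all unit vectors g, h ∈ H one has ‖g×e − h×k‖ ≥ sin φ, and this bound is attained: the minimum of ‖g×e − h×k‖ over unit vectors g, h ∈ H equals sin φ. -/

import Mathlib

open scoped InnerProductSpace

/-- The rank-one operator `f × g : h ↦ ⟨h, g⟩ • f` on a complex Hilbert space
(inner product linear in `h`). -/
noncomputable def rankOne {H : Type*} [NormedAddCommGroup H] [InnerProductSpace ℂ H]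
    (f g : H) : H →L[ℂ] H :=
  (innerSL ℂ g).smulRight f

set_option maxHeartbeats 1000000

/-- If `e` and `k` are unit vectors in a complex Hilbert space with
`⟨e, k⟩ = cos φ` for `0 < φ < π/2`, then `‖g×e − h×k‖ ≥ sin φ` for all unit
vectors `g, h`, and the minimum `sin φ` is attained. -/
theorem rankOne_sub_norm_min
    {H : Type*} [NormedAddCommGroup H] [InnerProductSpace ℂ H] [CompleteSpace H]
    (φ : ℝ) (hφ₀ : 0 < φ) (hφ₁ : φ < Real.pi / 2)
    (e k : H) (he : ‖e‖ = 1) (hk : ‖k‖ = 1)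
    (hek : ⟪e, k⟫_ℂ = (Real.cos φ : ℂ)) :
    (∀ g h : H, ‖g‖ = 1 → ‖h‖ = 1 → Real.sin φ ≤ ‖rankOne g e - rankOne h k‖) ∧
    (∃ g h : H, ‖g‖ = 1 ∧ ‖h‖ = 1 ∧ ‖rankOne g e - rankOne h k‖ = Real.sin φ) := by
  have hπ : φ < Real.pi := lt_trans hφ₁ (by linarith [Real.pi_pos])
  have hs : 0 < Real.sin φ := Real.sin_pos_of_pos_of_lt_pi hφ₀ hπ
  set c := Real.cos φ with hcdef
  set s := Real.sin φ with hsdef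
  have hc0 : 0 < c := Real.cos_pos_of_mem_Ioo ⟨by linarith, hφ₁⟩
  have hsc : s ^ 2 = 1 - c ^ 2 := by nlinarith [Real.sin_sq_add_cos_sq φ]
  have hscC : (s : ℂ) ^ 2 = 1 - (c : ℂ) ^ 2 := by exact_mod_cast congrArg (Complex.ofReal) hsc
  have hke : ⟪k, e⟫_ℂ = (c : ℂ) := by rw [← inner_conj_symm, hek]; simp
  have hee : ⟪e, e⟫_ℂ = 1 := by rw [inner_self_eq_norm_sq_to_K, he]; norm_num
  have hkk : ⟪k, k⟫_ℂ = 1 := by rw [inner_self_eq_norm_sq_to_K, hk]; norm_num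
  have hsne : (s : ℂ) ≠ 0 := by exact_mod_cast hs.ne'
  have hsinv : ‖((s : ℂ))⁻¹‖ = s⁻¹ := by
    rw [norm_inv, Complex.norm_real, Real.norm_eq_abs, abs_of_pos hs]
  clear_value c s
  have happ : ∀ (g h x : H), (rankOne g e - rankOne h k) x
      = ⟪e, x⟫_ℂ • g - ⟪k, x⟫_ℂ • h := by
    intro g h x
    simp [rankOne, ContinuousLinearMap.sub_apply]
  have hnorm_ek : ‖e - (c : ℂ) • k‖ = s := by
    have h2 : ‖e - (c : ℂ) • k‖ ^ 2 = s ^ 2 := by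
      rw [@norm_sub_sq ℂ, inner_smul_right, hek, norm_smul, he, hk, Complex.norm_real,
        Real.norm_eq_abs, abs_of_pos hc0]
      have : RCLike.re ((c : ℂ) * (c : ℂ)) = c * c := by
        rw [← Complex.ofReal_mul]; simp
      rw [this]; nlinarith
    nlinarith [norm_nonneg (e - (c : ℂ) • k)]
  have hnorm_ke : ‖k - (c : ℂ) • e‖ = s := by
    have h2 : ‖k - (c : ℂ) • e‖ ^ 2 = s ^ 2 := by
      rw [@norm_sub_sq ℂ, inner_smul_right, hke, norm_smul, he, hk, Complex.norm_real,
        Real.norm_eq_abs, abs_of_pos hc0]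
      have : RCLike.re ((c : ℂ) * (c : ℂ)) = c * c := by
        rw [← Complex.ofReal_mul]; simp
      rw [this]; nlinarith
    nlinarith [norm_nonneg (k - (c : ℂ) • e)]
  have hnorm_cke : ‖(c : ℂ) • k - e‖ = s := by
    rw [show (c : ℂ) • k - e = -(e - (c : ℂ) • k) by abel, norm_neg, hnorm_ek]
  have lower : ∀ g h : H, ‖g‖ = 1 → ‖h‖ = 1 → s ≤ ‖rankOne g e - rankOne h k‖ := by
    intro g h hg hh
    set x : H := ((s : ℂ))⁻¹ • (e - (c : ℂ) • k) with hx
    have hxnorm : ‖x‖ = 1 := by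
      rw [hx, norm_smul, hnorm_ek, hsinv, inv_mul_cancel₀ hs.ne']
    have h1 : ⟪e, x⟫_ℂ = (s : ℂ) := by
      rw [hx, inner_smul_right, inner_sub_right, inner_smul_right, hee, hek]
      field_simp
      linear_combination -hscC
    have h2 : ⟪k, x⟫_ℂ = 0 := by
      rw [hx, inner_smul_right, inner_sub_right, inner_smul_right, hkk, hke]
      simp
    have hax : (rankOne g e - rankOne h k) x = (s : ℂ) • g := by
      rw [happ, h1, h2]; simp
    have hle := (rankOne g e - rankOne h k).le_opNorm x
    rw [hax, hxnorm, mul_one, norm_smul, hg, mul_one, Complex.norm_real,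
      Real.norm_eq_abs, abs_of_pos hs] at hle
    exact hle
  refine ⟨lower, ?_⟩
  set g : H := ((s : ℂ))⁻¹ • (k - (c : ℂ) • e) with hgdef
  set h : H := ((s : ℂ))⁻¹ • ((c : ℂ) • k - e) with hhdef
  have hg : ‖g‖ = 1 := by rw [hgdef, norm_smul, hnorm_ke, hsinv, inv_mul_cancel₀ hs.ne']
  have hh : ‖h‖ = 1 := by rw [hhdef, norm_smul, hnorm_cke, hsinv, inv_mul_cancel₀ hs.ne']
  refine ⟨g, h, hg, hh, le_antisymm ?_ (lower g h hg hh)⟩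
  apply ContinuousLinearMap.opNorm_le_bound _ hs.le
  intro x
  set a := ⟪e, x⟫_ℂ with hadef
  set b := ⟪k, x⟫_ℂ with hbdef
  clear_value a b
  have horto : ⟪e, g⟫_ℂ = 0 := by
    rw [hgdef, inner_smul_right, inner_sub_right, inner_smul_right, hek, hee]
    simp
  have key : (rankOne g e - rankOne h k) x = ((s : ℂ) * b) • e + (a - (c : ℂ) * b) • g := by
    rw [happ, hgdef, hhdef, ← hadef, ← hbdef]
    match_scalars
    · field_simp
    · field_simp
      linear_combination (-b) * hscC
  have hAx : ‖(rankOne g e - rankOne h k) x‖ ^ 2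
      = s ^ 2 * Complex.normSq b + Complex.normSq (a - (c : ℂ) * b) := by
    rw [key, @norm_add_sq ℂ, inner_smul_left, inner_smul_right, horto]
    simp only [mul_zero, map_zero, add_zero, norm_smul, he, hg, mul_one]
    rw [Complex.sq_norm, Complex.sq_norm,
      Complex.normSq_mul, Complex.normSq_ofReal]
    ring
  set b' : ℂ := ((s : ℂ))⁻¹ * (b - (c : ℂ) * a) with hb'def
  set y : H := a • e + b' • g with hydef
  have hgx : ⟪g, x⟫_ℂ = b' := by
    rw [hgdef, inner_smul_left, inner_sub_left, inner_smul_left, ← hadef, ← hbdef, hb'def]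
    simp [map_inv₀, Complex.conj_ofReal]
  have hyx : ⟪y, x⟫_ℂ = ((Complex.normSq a + Complex.normSq b' : ℝ) : ℂ) := by
    rw [hydef, inner_add_left, inner_smul_left, inner_smul_left, hgx, ← hadef]
    rw [← Complex.normSq_eq_conj_mul_self, ← Complex.normSq_eq_conj_mul_self]
    push_cast
    ring
  have hy2 : ‖y‖ ^ 2 = Complex.normSq a + Complex.normSq b' := by
    rw [hydef, @norm_add_sq ℂ, inner_smul_left, inner_smul_right, horto]
    simp only [mul_zero, map_zero, add_zero, norm_smul, he, hg, mul_one]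
    rw [Complex.sq_norm, Complex.sq_norm]
  have hyle : ‖y‖ ≤ ‖x‖ := by
    have h1 : ‖y‖ ^ 2 ≤ ‖y‖ * ‖x‖ := by
      calc ‖y‖ ^ 2 = RCLike.re ⟪y, x⟫_ℂ := by rw [hyx, hy2]; simp
        _ ≤ ‖⟪y, x⟫_ℂ‖ := RCLike.re_le_norm _
        _ ≤ ‖y‖ * ‖x‖ := norm_inner_le_norm y x
    rcases eq_or_lt_of_le (norm_nonneg y) with h0 | h0
    · rw [← h0]; exact norm_nonneg x
    · nlinarith
  have hid : s ^ 2 * Complex.normSq b + Complex.normSq (a - (c : ℂ) * b)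
      = s ^ 2 * (Complex.normSq a + Complex.normSq b') := by
    have h1 : Complex.normSq b' = (s * s)⁻¹ * Complex.normSq (b - (c : ℂ) * a) := by
      rw [hb'def, Complex.normSq_mul, Complex.normSq_inv, Complex.normSq_ofReal]
    rw [h1]
    have h2 : s ^ 2 * ((s * s)⁻¹ * Complex.normSq (b - (c : ℂ) * a))
        = Complex.normSq (b - (c : ℂ) * a) := by
      rw [← mul_assoc]
      have h3 : s ^ 2 * (s * s)⁻¹ = 1 := by
        field_simp
      rw [h3, one_mul]
    rw [mul_add, h2]
    simp only [Complex.normSq_apply, Complex.sub_re, Complex.sub_im, Complex.mul_re,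
      Complex.mul_im, Complex.ofReal_re, Complex.ofReal_im]
    linear_combination (b.re ^ 2 + b.im ^ 2 - a.re ^ 2 - a.im ^ 2) * hsc
  have hsq : ‖(rankOne g e - rankOne h k) x‖ ^ 2 = s ^ 2 * ‖y‖ ^ 2 := by
    rw [hAx, hid, hy2]
  have hxnn : 0 ≤ s * ‖x‖ := by positivity
  have hy2' : ‖y‖ ^ 2 ≤ ‖x‖ ^ 2 := by
    rw [sq, sq]; exact mul_self_le_mul_self (norm_nonneg y) hyle
  calc ‖(rankOne g e - rankOne h k) x‖
      = Real.sqrt (‖(rankOne g e - rankOne h k) x‖ ^ 2) :=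
        (Real.sqrt_sq (norm_nonneg _)).symm
    _ ≤ Real.sqrt ((s * ‖x‖) ^ 2) := by
        apply Real.sqrt_le_sqrt
        rw [hsq, mul_pow]
        exact mul_le_mul_of_nonneg_left hy2' (sq_nonneg s)
    _ = s * ‖x‖ := Real.sqrt_sq hxnn
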